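/- For c = 4/9, the function f_c(t) = (t⁴−1)/(c t⁴ + (2−c) t³ + (2−c) t + c) − 2 arctan((t−1)/(t+1)) satisfies f_c(t) > 0 for all t > 1. -/

import Mathlib

noncomputable def f (c t : ℝ) : ℝ :=
  (t ^ 4 - 1) / (c * t ^ 4 + (2 - c) * t ^ 3 + (2 - c) * t + c)
    - 2 * Real.arctan ((t - 1) / (t + 1))

noncomputable def den (t : ℝ) : ℝ :=
  4 / 9 * t ^ 4 + (2 - 4 / 9) * t ^ 3 + (2 - 4 / 9) * t + 4 / 9

lemma den_pos {t : ℝ} (ht : (1:ℝ) ≤ t) : 0 < den t := by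
  unfold den; nlinarith [pow_pos (lt_of_lt_of_le one_pos ht) 3, pow_pos (lt_of_lt_of_le one_pos ht) 4]

noncomputable def fderiv' (t : ℝ) : ℝ :=
  (4 * t ^ 3 * den t - (t ^ 4 - 1) * (4 / 9 * (4 * t ^ 3) + (2 - 4 / 9) * (3 * t ^ 2) + (2 - 4 / 9)))
    / (den t) ^ 2 - 2 * (1 / (t ^ 2 + 1))

lemma hasDerivAt_f (t : ℝ) (ht : (1:ℝ) ≤ t) :
    HasDerivAt (f (4 / 9)) (fderiv' t) t := by
  have hD : (0:ℝ) < den t := den_pos ht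
  have hne : t + 1 ≠ 0 := by linarith
  have h1 : HasDerivAt (fun s : ℝ => s ^ 4 - 1) (4 * t ^ 3) t := by
    simpa using (hasDerivAt_pow 4 t).sub_const 1
  have h2 : HasDerivAt den
      (4 / 9 * (4 * t ^ 3) + (2 - 4 / 9) * (3 * t ^ 2) + (2 - 4 / 9)) t := by
    unfold den
    have := ((((hasDerivAt_pow 4 t).const_mul (4/9:ℝ)).add
      ((hasDerivAt_pow 3 t).const_mul ((2:ℝ) - 4/9))).add
      ((hasDerivAt_id t).const_mul ((2:ℝ) - 4/9))).add_const (4/9:ℝ)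
    convert this using 1
    all_goals try rfl
    push_cast; ring
  have hq := h1.div h2 hD.ne'
  have hu : HasDerivAt (fun s : ℝ => (s - 1) / (s + 1)) (2 / (t + 1) ^ 2) t := by
    have := ((hasDerivAt_id t).sub_const 1).div ((hasDerivAt_id t).add_const 1) hne
    convert this using 1
    all_goals try rfl
    simp only [id]; field_simp; ring
  have ha : HasDerivAt (fun s : ℝ => Real.arctan ((s - 1) / (s + 1))) (1 / (t ^ 2 + 1)) t := by
    have := (Real.hasDerivAt_arctan ((t - 1) / (t + 1))).comp t hu
    convert this using 1
    all_goals try rfl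
    have h0 : (t + 1) ^ 2 ≠ 0 := pow_ne_zero 2 hne
    field_simp
    ring
  have := hq.sub (ha.const_mul 2)
  exact this

lemma fderiv'_pos {t : ℝ} (ht : 1 < t) : 0 < fderiv' t := by
  have ht0 : (0:ℝ) < t := by linarith
  have hD : (0:ℝ) < den t := den_pos ht.le
  have hT : (0:ℝ) < t ^ 2 + 1 := by positivity
  have key : fderiv' t =
      ((t - 1) ^ 4 * (94 + 152 * t + 156 * t ^ 2 + 152 * t ^ 3 + 94 * t ^ 4) / 81)
        / ((den t) ^ 2 * (t ^ 2 + 1)) := by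
    unfold fderiv' den
    rw [mul_one_div, div_sub_div _ _ (by positivity) (by positivity : (t:ℝ) ^ 2 + 1 ≠ 0)]
    congr 1 <;> ring
  rw [key]
  apply div_pos
  · have h1 : (0:ℝ) < (t - 1) ^ 4 := pow_pos (by linarith) 4
    have h2 : (0:ℝ) < 94 + 152 * t + 156 * t ^ 2 + 152 * t ^ 3 + 94 * t ^ 4 := by
      nlinarith [pow_pos ht0 2, pow_pos ht0 3, pow_pos ht0 4]
    positivity
  · positivity

theorem stmt_11 : ∀ t : ℝ, 1 < t → 0 < f (4 / 9) t := by
  intro t ht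
  have hmono : StrictMonoOn (f (4 / 9)) (Set.Ici 1) := by
    apply strictMonoOn_of_deriv_pos (convex_Ici 1)
    · intro x hx
      exact (hasDerivAt_f x hx).differentiableAt.continuousAt.continuousWithinAt
    · intro x hx
      rw [interior_Ici] at hx
      rw [(hasDerivAt_f x (le_of_lt hx)).deriv]
      exact fderiv'_pos hx
  have h1 : f (4 / 9) 1 = 0 := by
    unfold f
    norm_num
  have := hmono (Set.self_mem_Ici) (Set.mem_Ici.mpr ht.le) ht
  rw [h1] at this
  exact this
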